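/- Let A and B be abelian groups with A torsion-free, and let φ : A → B be a surjective group homomorphism. If the precomposition map from Hom(B, ℂ) to Hom(A, ℂ) sending g to g ∘ φ is surjective (i.e. every additive homomorphism A → ℂ factors through φ), then φ is injective. (This is the group-theoretic core of Lemma 2.10 of the paper: the surjectivity of the restriction map H¹(X̃_f, ℂ) → H¹(F, ℂ), provided by Blanchard's degeneration theorem, forces the map π₁(F) → π₁(X̃_f) of abelian groups to be injective.) -/
import Mathlib

/-- Let `A`, `B` be abelian groups with `A` torsion-free, and `φ : A → B` a
surjective group homomorphism. If every additive homomorphism `A → ℂ`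
factors through `φ` (i.e. the precomposition map `Hom(B, ℂ) → Hom(A, ℂ)` is
surjective), then `φ` is injective. -/
theorem injective_of_torsionFree_of_homs_factor
    {A B : Type*} [AddCommGroup A] [AddCommGroup B]
    (hA : ∀ n : ℤ, n ≠ 0 → ∀ a : A, n • a = 0 → a = 0)
    (φ : A →+ B) (hφ : Function.Surjective φ)
    (hfact : ∀ f : A →+ ℂ, ∃ g : B →+ ℂ, g.comp φ = f) :
    Function.Injective φ := by
  rw [injective_iff_map_eq_zero]
  intro a ha0
  by_contra hne
  -- the map ℤ → A, n ↦ n • a, is injective since A is torsion-free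
  have hinj : Function.Injective (LinearMap.toSpanSingleton ℤ A a) := by
    intro m n hmn
    simp only [LinearMap.toSpanSingleton_apply] at hmn
    by_contra h
    exact hne (hA (m - n) (sub_ne_zero.mpr h) a (by rw [sub_smul, hmn, sub_self]))
  -- extend ℤ → ℂ, n ↦ n, along it using injectivity of ℂ as a ℤ-module
  haveI : Module.Injective ℤ ℂ := (Module.Baer.of_divisible ℂ).injective
  obtain ⟨h, hh⟩ := Module.Injective.extension_property ℤ ℂ ℤ A
    (LinearMap.toSpanSingleton ℤ A a) hinj (LinearMap.toSpanSingleton ℤ ℂ 1)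
  obtain ⟨g, hg⟩ := hfact h.toAddMonoidHom
  have h1 : h a = 1 := by
    have := congrFun (congrArg (fun f => f.toFun) hh) 1
    simpa using this
  have : g (φ a) = h a := congrFun (congrArg (fun f => f.toFun) hg) a
  rw [ha0, map_zero, h1] at this
  exact one_ne_zero this.symm
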